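/- If h is a log-concave probability density on ℝ with median w and x > w, then ∫ₓ^∞ h ≤ h(x)/(2 h(w)). -/

import Mathlib

open MeasureTheory

def LogConcaveFn (h : ℝ → ℝ) : Prop :=
  (∀ x, 0 ≤ h x) ∧
  ∀ x y l : ℝ, 0 < l → l < 1 → h x ^ (1 - l) * h y ^ l ≤ h ((1 - l) * x + l * y)

lemma exp_tail_integral (a : ℝ) {c : ℝ} (hc : 0 < c) :
    ∫ t in Set.Ioi a, Real.exp (-(c*(t-a))) = 1/c := by
  have e : ∀ t : ℝ, Real.exp (-(c*(t-a))) = Real.exp (c*a) * Real.exp (-(c*t)) := by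
    intro t; rw [← Real.exp_add]; ring_nf
  simp_rw [e]
  rw [integral_const_mul]
  have h2 := integral_comp_mul_left_Ioi (fun u => Real.exp (-u)) a hc
  simp only [smul_eq_mul] at h2
  rw [show (fun t : ℝ => Real.exp (-(c*t))) = fun t => (fun u => Real.exp (-u)) (c*t) from rfl]
  rw [h2, integral_exp_neg_Ioi, mul_left_comm, ← Real.exp_add]
  simp [one_div]

lemma exp_mid_integral {w x : ℝ} (hwx : w ≤ x) {c : ℝ} (hc : 0 < c) :
    ∫ t in Set.Ioc w x, Real.exp (-(c*(t-w))) = (1 - Real.exp (-(c*(x-w))))/c := by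
  rw [← intervalIntegral.integral_of_le hwx]
  have hd : ∀ t ∈ Set.uIcc w x,
      HasDerivAt (fun t => -(Real.exp (-(c*(t-w)))/c)) (Real.exp (-(c*(t-w)))) t := by
    intro t _
    have h1 : HasDerivAt (fun t : ℝ => -(c*(t-w))) (-c) t := by
      have := ((hasDerivAt_id t).sub_const w).const_mul (-c)
      simpa [neg_mul] using this
    have h2 := (h1.exp.div_const c).neg
    have h3 : Real.exp (-(c*(t-w))) * -c / c = -Real.exp (-(c*(t-w))) := by
      field_simp
    rw [h3, neg_neg] at h2
    exact h2
  have hint : IntervalIntegrable (fun t => Real.exp (-(c*(t-w)))) volume w x :=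
    (by continuity : Continuous fun t : ℝ => Real.exp (-(c*(t-w)))).intervalIntegrable w x
  rw [intervalIntegral.integral_eq_sub_of_hasDerivAt hd hint]
  simp [Real.exp_zero]
  ring

lemma tail_pt {h : ℝ → ℝ} (hnn : ∀ x, 0 ≤ h x)
    (hcc : ∀ x y l : ℝ, 0 < l → l < 1 → h x ^ (1-l) * h y ^ l ≤ h ((1-l)*x + l*y))
    {w x : ℝ} (hwx : w < x) (hwpos : 0 < h w) (hxpos : 0 < h x) {t : ℝ} (hxt : x ≤ t) :
    h t ≤ h x * Real.exp (-(Real.log (h w / h x)/(x-w) * (t - x))) := by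
  rcases eq_or_lt_of_le hxt with rfl|hxt
  · simp
  set c := Real.log (h w / h x)/(x-w) with hcdef
  set l := (x-w)/(t-w) with hldef
  have htw : w < t := hwx.trans hxt
  have hl0 : 0 < l := div_pos (by linarith) (by linarith)
  have hl1 : l < 1 := (div_lt_one (by linarith)).2 (by linarith)
  have hne1 : t - w ≠ 0 := sub_ne_zero.mpr (ne_of_gt htw)
  have hne2 : x - w ≠ 0 := sub_ne_zero.mpr (ne_of_gt hwx)
  have hco : (1-l)*w + l*t = x := by
    rw [hldef]; field_simp; ring
  have key := hcc w t l hl0 hl1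
  rw [hco] at key
  by_cases hht : h t = 0
  · rw [hht]; positivity
  have htpos : 0 < h t := lt_of_le_of_ne (hnn t) (Ne.symm hht)
  have hA : 0 < h w ^ (1-l) * h t ^ l :=
    mul_pos (Real.rpow_pos_of_pos hwpos _) (Real.rpow_pos_of_pos htpos _)
  have hlog := (Real.log_le_log_iff hA (hA.trans_le key)).2 key
  rw [Real.log_mul (ne_of_gt (Real.rpow_pos_of_pos hwpos _))
    (ne_of_gt (Real.rpow_pos_of_pos htpos _)),
    Real.log_rpow hwpos, Real.log_rpow htpos] at hlog
  have hLdiv : Real.log (h w / h x) = Real.log (h w) - Real.log (h x) :=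
    Real.log_div (ne_of_gt hwpos) (ne_of_gt hxpos)
  have hkey2 : l * (c * (t-x)) = (1-l)*(Real.log (h w) - Real.log (h x)) := by
    rw [hcdef, hLdiv, hldef]
    field_simp
    ring
  have hgoal_log : Real.log (h t) ≤ Real.log (h x) - c*(t-x) := by
    have h5 : l * Real.log (h t) ≤ l * (Real.log (h x) - c*(t-x)) := by
      have hexpand : l * (Real.log (h x) - c*(t-x)) = l*Real.log (h x) - l*(c*(t-x)) := by ring
      rw [hexpand, hkey2]; linarith
    exact le_of_mul_le_mul_left h5 hl0
  calc h t = Real.exp (Real.log (h t)) := (Real.exp_log htpos).symm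
    _ ≤ Real.exp (Real.log (h x) - c*(t-x)) := Real.exp_le_exp.2 hgoal_log
    _ = h x * Real.exp (-(c*(t-x))) := by
        rw [sub_eq_add_neg, Real.exp_add, Real.exp_log hxpos]

lemma mid_pt {h : ℝ → ℝ}
    (hcc : ∀ x y l : ℝ, 0 < l → l < 1 → h x ^ (1-l) * h y ^ l ≤ h ((1-l)*x + l*y))
    {w x : ℝ} (hwx : w < x) (hwpos : 0 < h w) (hxpos : 0 < h x) {t : ℝ}
    (hwt : w ≤ t) (htx : t ≤ x) :
    h w * Real.exp (-(Real.log (h w / h x)/(x-w) * (t - w))) ≤ h t := by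
  set c := Real.log (h w / h x)/(x-w) with hcdef
  have hLdiv : Real.log (h w / h x) = Real.log (h w) - Real.log (h x) :=
    Real.log_div (ne_of_gt hwpos) (ne_of_gt hxpos)
  have hne2 : x - w ≠ 0 := sub_ne_zero.mpr (ne_of_gt hwx)
  have hexpeq : Real.exp (-(c*(x-w))) = h x / h w := by
    rw [hcdef, div_mul_cancel₀ _ hne2, Real.exp_neg,
      Real.exp_log (div_pos hwpos hxpos), inv_div]
  rcases eq_or_lt_of_le hwt with rfl|hwt
  · simp
  rcases eq_or_lt_of_le htx with rfl|htx
  · rw [hexpeq, mul_div_cancel₀ _ (ne_of_gt hwpos)]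
  set l := (t-w)/(x-w) with hldef
  have hl0 : 0 < l := div_pos (by linarith) (by linarith)
  have hl1 : l < 1 := (div_lt_one (by linarith)).2 (by linarith)
  have hco : (1-l)*w + l*x = t := by
    rw [hldef]; field_simp; ring
  have key := hcc w x l hl0 hl1
  rw [hco] at key
  refine le_trans (le_of_eq ?_) key
  rw [Real.rpow_def_of_pos hwpos, Real.rpow_def_of_pos hxpos, ← Real.exp_add,
    show h w * Real.exp (-(c*(t-w))) = Real.exp (Real.log (h w) + -(c*(t-w))) by
      rw [Real.exp_add, Real.exp_log hwpos]]
  congr 1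
  rw [hcdef, hLdiv, hldef]
  field_simp
  ring

theorem logconcave_tail_estimate
    (h : ℝ → ℝ) (hlc : LogConcaveFn h)
    (hi : Integrable h) (h1 : ∫ x, h x = 1)
    (w : ℝ) (hw : ∫ x in Set.Iic w, h x = 1 / 2) (hwpos : 0 < h w)
    (x : ℝ) (hx : w < x) :
    ∫ t in Set.Ioi x, h t ≤ h x / (2 * h w) := by
  obtain ⟨hnn, hcc⟩ := hlc
  have hIoiw : ∫ t in Set.Ioi w, h t = 1/2 := by
    have h2 := intervalIntegral.integral_Iic_add_Ioi (b := w) (μ := volume) hi.integrableOn hi.integrableOn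
    rw [h1, hw] at h2; linarith
  have hT0 : 0 ≤ ∫ t in Set.Ioi x, h t :=
    setIntegral_nonneg measurableSet_Ioi fun t _ => hnn t
  rcases le_or_gt (h w) (h x) with hcase|hcase
  · have hsub : ∫ t in Set.Ioi x, h t ≤ ∫ t in Set.Ioi w, h t := by
      apply setIntegral_mono_set hi.integrableOn
        (Filter.Eventually.of_forall fun t => hnn t)
      exact HasSubset.Subset.eventuallyLE (Set.Ioi_subset_Ioi hx.le)
    rw [hIoiw] at hsub
    have : (1:ℝ)/2 ≤ h x / (2 * h w) := by
      rw [div_le_div_iff₀ (by norm_num) (by positivity)]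
      nlinarith
    linarith
  · by_cases hx0 : h x = 0
    · have hzero : Set.EqOn h 0 (Set.Ioi x) := by
        intro t ht
        simp only [Set.mem_Ioi] at ht
        have htw : w < t := hx.trans ht
        set l := (x-w)/(t-w) with hldef
        have hl0 : 0 < l := div_pos (by linarith) (by linarith)
        have hl1 : l < 1 := (div_lt_one (by linarith)).2 (by linarith)
        have hne1 : t - w ≠ 0 := sub_ne_zero.mpr (ne_of_gt htw)
        have hco : (1-l)*w + l*t = x := by
          rw [hldef]; field_simp; ring
        have key := hcc w t l hl0 hl1
        rw [hco, hx0] at key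
        have hwp : 0 < h w ^ (1-l) := Real.rpow_pos_of_pos hwpos _
        have h2 : h t ^ l = 0 := by
          have hnng : 0 ≤ h t ^ l := Real.rpow_nonneg (hnn t) l
          nlinarith
        have := (Real.rpow_eq_zero_iff_of_nonneg (hnn t)).1 h2
        exact this.1
      rw [setIntegral_congr_fun measurableSet_Ioi hzero]
      simp [hx0]
    · have hxpos : 0 < h x := lt_of_le_of_ne (hnn x) (Ne.symm hx0)
      set c := Real.log (h w / h x) / (x - w) with hcdef
      have hc : 0 < c := div_pos (Real.log_pos ((one_lt_div hxpos).2 hcase)) (by linarith)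
      have hmaj : IntegrableOn (fun t => h x * Real.exp (-(c*(t-x)))) (Set.Ioi x) volume := by
        have hbase : IntegrableOn (fun t => Real.exp (-c * t)) (Set.Ioi x) volume :=
          exp_neg_integrableOn_Ioi x hc
        have h4 := hbase.const_mul (h x * Real.exp (c*x))
        refine IntegrableOn.congr_fun h4 ?_ measurableSet_Ioi
        intro t _
        simp only [mul_assoc, ← Real.exp_add]
        ring_nf
      have htail : ∫ t in Set.Ioi x, h t ≤ h x * (1/c) := by
        calc ∫ t in Set.Ioi x, h t
            ≤ ∫ t in Set.Ioi x, h x * Real.exp (-(c*(t-x))) := by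
              apply setIntegral_mono_on hi.integrableOn hmaj measurableSet_Ioi
              intro t ht
              exact tail_pt hnn hcc hx hwpos hxpos (le_of_lt ht)
          _ = h x * (1/c) := by rw [integral_const_mul, exp_tail_integral x hc]
      have hmin : IntegrableOn (fun t => h w * Real.exp (-(c*(t-w)))) (Set.Ioc w x) volume :=
        Continuous.integrableOn_Ioc (continuous_const.mul (Real.continuous_exp.comp (by continuity)))
      have hmid : h w * ((1 - Real.exp (-(c*(x-w))))/c) ≤ ∫ t in Set.Ioc w x, h t := by
        calc h w * ((1 - Real.exp (-(c*(x-w))))/c)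
            = ∫ t in Set.Ioc w x, h w * Real.exp (-(c*(t-w))) := by
              rw [integral_const_mul, exp_mid_integral hx.le hc]
          _ ≤ ∫ t in Set.Ioc w x, h t := by
              apply setIntegral_mono_on hmin hi.integrableOn measurableSet_Ioc
              intro t ht
              exact mid_pt hcc hx hwpos hxpos ht.1.le ht.2
      have hsplit : (∫ t in Set.Ioc w x, h t) + (∫ t in Set.Ioi x, h t) = 1/2 := by
        rw [← hIoiw, ← setIntegral_union (Set.Ioc_disjoint_Ioi le_rfl) measurableSet_Ioi
          hi.integrableOn hi.integrableOn, Set.Ioc_union_Ioi_eq_Ioi hx.le]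
      have hexp : Real.exp (-(c*(x-w))) = h x / h w := by
        rw [hcdef, div_mul_cancel₀ _ (by linarith : x - w ≠ 0), Real.exp_neg,
          Real.exp_log (div_pos hwpos hxpos), inv_div]
      rw [hexp] at hmid
      set T := ∫ t in Set.Ioi x, h t with hTdef
      have hM0 : 0 ≤ ∫ t in Set.Ioc w x, h t :=
        setIntegral_nonneg measurableSet_Ioc fun t _ => hnn t
      have e1 : T * c ≤ h x := by
        rw [← le_div_iff₀ hc]
        calc T ≤ h x * (1/c) := htail
          _ = h x / c := by ring
      have e2 : h w - h x ≤ (1/2 - T) * c := by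
        have : h w * ((1 - h x / h w)/c) = (h w - h x)/c := by
          field_simp
        rw [this] at hmid
        rw [← div_le_iff₀ hc]
        linarith
      rw [le_div_iff₀ (by positivity : (0:ℝ) < 2 * h w)]
      nlinarith [mul_le_mul e2 e1 (by positivity) (by nlinarith : 0 ≤ (1/2 - T) * c)]
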